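/- Consider the path P_4 on four vertices x, b, a, y with edges {x,b}, {b,a}, {a,y}, and let f satisfy the Shannon inequalities for P_4. Then f({a}) + f({b}) ≥ f({a,b,x}) − f({x}) + 1. (This is the base case d = 1 of Lemma 1, since C*_1 is a path of length 3.) -/
import Mathlib


open Finset

/-- A finset of vertices is independent: it contains no edge of `G`. -/
def IsIndepSet {V : Type*} (G : SimpleGraph V) (A : Finset V) : Prop :=
  ∀ u ∈ A, ∀ v ∈ A, ¬ G.Adj u v

/-- `f` satisfies the Shannon inequalities for `G`: (a) normalization and
positivity, (b) monotonicity, (c) submodularity, (d) strong monotonicity,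
(e) strong submodularity. -/
structure ShannonIneqs {V : Type*} [DecidableEq V] (G : SimpleGraph V)
    (f : Finset V → ℝ) : Prop where
  empty : f ∅ = 0
  nonneg : ∀ A, 0 ≤ f A
  mono : ∀ A B, A ⊆ B → f A ≤ f B
  submod : ∀ A B, f (A ∩ B) + f (A ∪ B) ≤ f A + f B
  strongMono : ∀ A B, A ⊆ B → IsIndepSet G A → ¬ IsIndepSet G B → f A + 1 ≤ f B
  strongSubmod : ∀ A B, ¬ IsIndepSet G A → ¬ IsIndepSet G B → IsIndepSet G (A ∩ B) →
    1 + f (A ∩ B) + f (A ∪ B) ≤ f A + f B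

/-- Base case `d = 1` of Lemma 1: on the path `P_4` with vertices
`x = 0`, `b = 1`, `a = 2`, `y = 3` and edges `{x,b}, {b,a}, {a,y}`, any `f`
satisfying the Shannon inequalities obeys
`f({a}) + f({b}) ≥ f({a,b,x}) − f({x}) + 1`. -/
theorem path_base_case (f : Finset (Fin 4) → ℝ)
    (hf : ShannonIneqs (SimpleGraph.pathGraph 4) f) :
    f {0, 1, 2} - f {0} + 1 ≤ f {2} + f {1} := by
  have h1 : ¬ IsIndepSet (SimpleGraph.pathGraph 4) ({0,1} : Finset (Fin 4)) := by
    simp only [IsIndepSet, SimpleGraph.pathGraph_adj]; decide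
  have h2 : ¬ IsIndepSet (SimpleGraph.pathGraph 4) ({1,2} : Finset (Fin 4)) := by
    simp only [IsIndepSet, SimpleGraph.pathGraph_adj]; decide
  have h3 : IsIndepSet (SimpleGraph.pathGraph 4) (({0,1} : Finset (Fin 4)) ∩ {1,2}) := by
    simp only [IsIndepSet, SimpleGraph.pathGraph_adj]; decide
  have hS := hf.strongSubmod {0,1} {1,2} h1 h2 h3
  have e1 : (({0,1} : Finset (Fin 4)) ∩ {1,2}) = {1} := by decide
  have e2 : (({0,1} : Finset (Fin 4)) ∪ {1,2}) = {0,1,2} := by decide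
  rw [e1, e2] at hS
  have a1 := hf.submod {0} {1}
  have a2 := hf.submod {1} {2}
  have i1 : (({0} : Finset (Fin 4)) ∩ {1}) = ∅ := by decide
  have i2 : (({1} : Finset (Fin 4)) ∩ {2}) = ∅ := by decide
  have u1 : (({0} : Finset (Fin 4)) ∪ {1}) = {0,1} := by decide
  have u2 : (({1} : Finset (Fin 4)) ∪ {2}) = {1,2} := by decide
  rw [i1, u1, hf.empty] at a1
  rw [i2, u2, hf.empty] at a2
  linarith
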